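/- Let R be an algebraically closed field of characteristic 0. Let N be an odd positive integer, s a natural number, c a nonzero element of R, and A an invertible N×N matrix over R such that A^(2^s) = c·I_N. Then the trace of A is nonzero. -/

import Mathlib

open Polynomial

/-- Evaluating the characteristic polynomial of a matrix. -/
lemma aux_eval_charpoly {R : Type*} [CommRing R] {n : Type*} [Fintype n] [DecidableEq n]
    (A : Matrix n n R) (μ : R) :
    A.charpoly.eval μ = (μ • (1 : Matrix n n R) - A).det := by
  rw [Matrix.charpoly, ← Polynomial.coe_evalRingHom, RingHom.map_det]
  congr 1
  ext i j
  by_cases h : i = j <;>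
    simp [Matrix.charmatrix_apply, Matrix.one_apply, Matrix.diagonal_apply, h]

/-- Powers of matrices act on eigenvectors. -/
lemma aux_pow_mulVec {R : Type*} [CommRing R] {n : Type*} [Fintype n] [DecidableEq n]
    (A : Matrix n n R) (μ : R) (v : n → R) (hv : A.mulVec v = μ • v) (k : ℕ) :
    (A ^ k).mulVec v = μ ^ k • v := by
  induction k with
  | zero => simp [Matrix.one_mulVec]
  | succ k ih =>
      rw [pow_succ, ← Matrix.mulVec_mulVec, hv, Matrix.mulVec_smul, ih, smul_smul, mul_comm,
        ← pow_succ]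

/-- Any root of the characteristic polynomial of `A` satisfies the same
polynomial identity `x ^ (2 ^ s) = c` as `A` does. -/
lemma aux_root_pow {R : Type*} [Field R] {n : Type*} [Fintype n] [DecidableEq n]
    {s : ℕ} {c : R} {A : Matrix n n R} (hpow : A ^ (2 ^ s) = c • (1 : Matrix n n R))
    {μ : R} (hμ : A.charpoly.IsRoot μ) : μ ^ (2 ^ s) = c := by
  have hdet : (μ • (1 : Matrix n n R) - A).det = 0 := by
    rw [← aux_eval_charpoly]; exact hμ
  obtain ⟨v, hv0, hv⟩ := (Matrix.exists_mulVec_eq_zero_iff).mpr hdet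
  have hAv : A.mulVec v = μ • v := by
    have := hv
    rw [Matrix.sub_mulVec, sub_eq_zero] at this
    rw [← this, Matrix.smul_mulVec, Matrix.one_mulVec]
  have h1 : (A ^ (2 ^ s)).mulVec v = μ ^ (2 ^ s) • v := aux_pow_mulVec A μ v hAv _
  rw [hpow, Matrix.smul_mulVec, Matrix.one_mulVec] at h1
  obtain ⟨j, hj⟩ := Function.ne_iff.mp hv0
  have := congrFun h1 j
  simp only [Pi.smul_apply, smul_eq_mul] at this
  rw [mul_eq_mul_right_iff] at this
  rcases this with h | h
  · exact h.symm
  · exact absurd h hj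

/-- The key algebraic fact: an odd number of `2 ^ s`-th roots of unity in a field of
characteristic zero cannot sum to zero. -/
lemma aux_key_sum {R : Type*} [Field R] [CharZero R] {s : ℕ} {ζ : R}
    (hζ : IsPrimitiveRoot ζ (2 ^ s)) {N : ℕ} (hN : Odd N) (x : Fin N → R)
    (hx : ∀ i, x i ^ (2 ^ s) = 1) : ∑ i, x i ≠ 0 := by
  rcases Nat.eq_zero_or_pos s with rfl | hs
  · simp only [pow_zero, pow_one] at hx
    have : ∑ i, x i = (N : R) := by
      rw [Finset.sum_congr rfl fun i _ => hx i]
      simp [Finset.card_univ]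
    rw [this]
    exact_mod_cast Nat.cast_ne_zero.mpr hN.pos.ne'
  · obtain ⟨t, rfl⟩ : ∃ t, s = t + 1 := ⟨s - 1, (Nat.succ_pred_eq_of_pos hs).symm⟩
    set m : ℕ := 2 ^ t with hm
    have h2s : 2 ^ (t + 1) = 2 * m := by rw [hm, pow_succ, mul_comm]
    have hm1 : 1 ≤ m := Nat.one_le_two_pow
    -- ζ ^ m = -1
    have hζm : ζ ^ m = -1 := by
      have hsq : (ζ ^ m) ^ 2 = 1 := by
        rw [← pow_mul, mul_comm, ← h2s]; exact hζ.pow_eq_one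
      have hne : ζ ^ m ≠ 1 := hζ.pow_ne_one_of_pos_of_lt (by positivity)
        (by rw [h2s]; omega)
      rcases mul_eq_zero.mp (show (ζ ^ m - 1) * (ζ ^ m + 1) = 0 by linear_combination hsq)
        with h | h
      · exact absurd (sub_eq_zero.mp h) hne
      · exact eq_neg_of_add_eq_zero_left h
    haveI : NeZero (2 ^ (t + 1)) := ⟨by positivity⟩
    choose k hk1 hk2 using fun i => hζ.eq_pow_of_pow_eq_one (hx i)
    -- the integer polynomial
    set term : ℕ → Polynomial ℤ := fun a =>
      if a < m then (X : Polynomial ℤ) ^ a else -(X ^ (a - m)) with hterm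
    set p : Polynomial ℤ := ∑ i, term (k i) with hp
    -- evaluation of the terms at ζ
    have haev : ∀ i, (aeval ζ) (term (k i)) = x i := by
      intro i
      rw [hterm]
      by_cases h : k i < m
      · simp only [if_pos h, map_pow, aeval_X]
        exact hk2 i
      · simp only [if_neg h, map_neg, map_pow, aeval_X]
        push_neg at h
        rw [← hk2 i]
        have hki : ζ ^ k i = ζ ^ m * ζ ^ (k i - m) := by
          rw [← pow_add]; congr 1; omega
        rw [hki, hζm]; ring
    -- p is nonzero: its value at 1 is odd
    have hpne : p ≠ 0 := by
      intro hp0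
      have he : p.eval 1 = 0 := by rw [hp0]; simp
      have he2 : p.eval 1 = ∑ i, (if k i < m then (1 : ℤ) else -1) := by
        rw [hp, Polynomial.eval_finset_sum]
        refine Finset.sum_congr rfl fun i _ => ?_
        rw [hterm]
        by_cases h : k i < m <;> simp [h]
      have hcast : ((p.eval 1 : ℤ) : ZMod 2) = (N : ZMod 2) := by
        rw [he2]
        push_cast
        have hterm1 : ∀ i : Fin N, (if k i < m then (1 : ZMod 2) else -1) = 1 := by
          intro i
          by_cases h : k i < m
          · simp [h]
          · simp only [if_neg h]; decide
        rw [Finset.sum_congr rfl fun i _ => hterm1 i, Finset.sum_const, Finset.card_univ,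
          Fintype.card_fin, nsmul_eq_mul, mul_one]
      rw [he] at hcast
      have h2N : (2 : ℕ) ∣ N :=
        (ZMod.natCast_eq_zero_iff N 2).mp (by rw [← hcast]; simp)
      have := Nat.odd_iff.mp hN
      omega
    -- degree bound
    have hdeg : p.natDegree ≤ m - 1 := by
      rw [hp]
      apply Polynomial.natDegree_sum_le_of_forall_le
      intro i _
      rw [hterm]
      by_cases h : k i < m
      · simp only [if_pos h, natDegree_X_pow]; omega
      · simp only [if_neg h, natDegree_neg, natDegree_X_pow]
        have := hk1 i
        rw [h2s] at this
        omega
    -- now compare with the minimal polynomial of ζ over ℚ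
    intro hsum
    set P : Polynomial ℚ := p.map (algebraMap ℤ ℚ) with hP
    have hPne : P ≠ 0 := by
      rw [hP, Ne, Polynomial.map_eq_zero_iff (algebraMap ℤ ℚ).injective_int]
      exact hpne
    have hPaev : (aeval ζ) P = 0 := by
      rw [hP, Polynomial.aeval_map_algebraMap]
      rw [hp, map_sum]
      rw [Finset.sum_congr rfl fun i _ => haev i]
      exact hsum
    have hmin := minpoly.degree_le_of_ne_zero ℚ ζ hPne hPaev
    have hminpoly : minpoly ℚ ζ = cyclotomic (2 ^ (t + 1)) ℚ :=
      (cyclotomic_eq_minpoly_rat hζ (by positivity)).symm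
    have hnd : (minpoly ℚ ζ).natDegree = m := by
      rw [hminpoly, natDegree_cyclotomic, Nat.totient_prime_pow Nat.prime_two (Nat.succ_pos t)]
      simp [hm]
    have hle : (minpoly ℚ ζ).natDegree ≤ P.natDegree :=
      Polynomial.natDegree_le_natDegree hmin
    have hPnd : P.natDegree ≤ m - 1 := by
      rw [hP, Polynomial.natDegree_map_eq_of_injective (algebraMap ℤ ℚ).injective_int]
      exact hdeg
    omega

/-- **Lemma.** Let `R` be an algebraically closed field of characteristic 0, `N` an odd
positive integer, `s` a natural number, `c` a nonzero element of `R`, and `A` an invertible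
`N × N` matrix over `R` with `A ^ (2 ^ s) = c • 1`.  Then the trace of `A` is nonzero. -/
theorem stmt_0 (R : Type*) [Field R] [IsAlgClosed R] [CharZero R]
    (N : ℕ) (hNodd : Odd N) (hNpos : 0 < N)
    (s : ℕ) (c : R) (hc : c ≠ 0)
    (A : Matrix (Fin N) (Fin N) R) (hA : IsUnit A)
    (hpow : A ^ (2 ^ s) = c • (1 : Matrix (Fin N) (Fin N) R)) :
    A.trace ≠ 0 := by
  intro htr
  -- a `2 ^ s`-th root of `c`
  obtain ⟨d, hd⟩ := IsAlgClosed.exists_pow_nat_eq c (n := 2 ^ s) (by positivity)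
  have hd0 : d ≠ 0 := by
    intro h
    apply hc
    rw [← hd, h, zero_pow (pow_pos (by norm_num : (0:ℕ) < 2) s).ne']
  -- a primitive `2 ^ s`-th root of unity
  haveI : NeZero ((2 ^ s : ℕ) : R) :=
    ⟨Nat.cast_ne_zero.mpr (pow_pos (by norm_num : (0:ℕ) < 2) s).ne'⟩
  obtain ⟨ζ, hζ⟩ := HasEnoughRootsOfUnity.exists_primitiveRoot R (2 ^ s)
  -- roots of the characteristic polynomial
  have htr' : A.trace = A.charpoly.roots.sum := Matrix.trace_eq_sum_roots_charpoly A
  set l := A.charpoly.roots.toList with hl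
  have hlen : l.length = N := by
    rw [hl, Multiset.length_toList,
      (Polynomial.splits_iff_card_roots).mp (IsAlgClosed.splits A.charpoly),
      Matrix.charpoly_natDegree_eq_dim, Fintype.card_fin]
  have hmem : ∀ i : Fin l.length, l[(i : ℕ)] ∈ A.charpoly.roots := fun i =>
    Multiset.mem_toList.mp (List.getElem_mem i.isLt)
  have hroot : ∀ i : Fin l.length, (l[(i : ℕ)]) ^ (2 ^ s) = c := fun i =>
    aux_root_pow hpow (Polynomial.isRoot_of_mem_roots (hmem i))
  have hodd : Odd l.length := hlen ▸ hNodd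
  have hx : ∀ i : Fin l.length, (l[(i : ℕ)] * d⁻¹) ^ (2 ^ s) = 1 := by
    intro i
    rw [mul_pow, hroot i, inv_pow, hd, mul_inv_cancel₀ hc]
  have := aux_key_sum hζ hodd (fun i : Fin l.length => l[(i : ℕ)] * d⁻¹) hx
  apply this
  rw [← Finset.sum_mul, Fin.sum_univ_getElem, hl, Multiset.sum_toList, ← htr', htr, zero_mul]
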